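/- arXiv:0807.4308 — 7 statements merged into one kernel-verified Lean document; each statement's English description precedes it below -/
import Mathlib

section
/- Let K be an algebraically closed field and let f ∈ K[Z] be a polynomial of degree n ≥ 1. The following are equivalent: (i) for every integer k with 0 ≤ k < n, the image of the k-th Hasse derivative Δ^k f in the quotient ring K[Z]/(f) is nilpotent; (ii) there exists α ∈ K such that f = c·(Z − α)^n, where c is the leading coefficient of f. -/
open Polynomial

/-- Let `K` be an algebraically closed field and `f ∈ K[Z]` a polynomial of
degree `n ≥ 1`.  The following are equivalent: (i) for every `k < n` the image of the `k`-th
Hasse derivative `Δ^k f` in `K[Z]/(f)` is nilpotent; (ii) `f = c·(Z − α)^n` for some `α ∈ K`,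
where `c` is the leading coefficient of `f`. -/
theorem hasseDeriv_nilpotent_iff_pow_linear {K : Type*} [Field K] [IsAlgClosed K]
    (f : Polynomial K) (n : ℕ) (hn : 1 ≤ n) (hdeg : f.natDegree = n) :
    (∀ k, k < n →
        IsNilpotent (Ideal.Quotient.mk (Ideal.span {f}) (Polynomial.hasseDeriv k f))) ↔
      ∃ α : K, f = Polynomial.C f.leadingCoeff * (Polynomial.X - Polynomial.C α) ^ n := by
  have hf0 : f ≠ 0 := fun h => by rw [h, natDegree_zero] at hdeg; omega
  constructor
  · intro H
    -- find a root α of f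
    obtain ⟨α, hα⟩ := IsAlgClosed.exists_root f (by
      rw [degree_eq_natDegree hf0, hdeg]
      exact_mod_cast (by omega : n ≠ 0))
    rw [IsRoot] at hα
    refine ⟨α, ?_⟩
    -- all low coefficients of `taylor α f` vanish
    have hcoeff : ∀ k, k < n → (taylor α f).coeff k = 0 := by
      intro k hk
      obtain ⟨N, hN⟩ := H k hk
      rw [← map_pow, Ideal.Quotient.eq_zero_iff_mem, Ideal.mem_span_singleton] at hN
      obtain ⟨g, hg⟩ := hN
      have h0 : ((hasseDeriv k f).eval α) ^ N = 0 := by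
        rw [← eval_pow, hg, eval_mul, hα, zero_mul]
      rw [taylor_coeff]
      by_contra h
      exact pow_ne_zero N h h0
    set c := (taylor α f).coeff n with hc
    have hg : taylor α f = C c * X ^ n := by
      ext k
      rcases lt_trichotomy k n with hk | rfl | hk
      · rw [hcoeff k hk, coeff_C_mul, coeff_X_pow, if_neg hk.ne, mul_zero]
      · simp [coeff_C_mul, coeff_X_pow, hc]
      · rw [coeff_eq_zero_of_natDegree_lt (by rw [natDegree_taylor, hdeg]; exact hk),
          coeff_C_mul, coeff_X_pow, if_neg hk.ne', mul_zero]
    have hf : f = C c * (X - C α) ^ n := by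
      have h2 := congrArg (taylor (-α)) hg
      rw [taylor_taylor, neg_add_cancel, taylor_zero, taylor_mul, taylor_C] at h2
      have h3 : taylor (-α) ((X : K[X]) ^ n) = (X - C α) ^ n := by
        simp [taylor_apply, pow_comp, sub_eq_add_neg]
      rw [h3] at h2
      exact h2
    have hlc : f.leadingCoeff = c := by
      rw [hf, leadingCoeff_mul, leadingCoeff_C, ((monic_X_sub_C α).pow n).leadingCoeff, mul_one]
    rw [hlc]
    exact hf
  · rintro ⟨α, hf⟩ k hk
    set c := f.leadingCoeff with hcdef
    have hc : c ≠ 0 := leadingCoeff_ne_zero.mpr hf0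
    -- `(X - C α)^n` is in the span of `f`
    have hdvd : f ∣ (X - C α) ^ n := by
      refine ⟨C c⁻¹, ?_⟩
      rw [hf, mul_comm, ← mul_assoc, ← C_mul, inv_mul_cancel₀ hc, C_1, one_mul]
    have ht : Ideal.Quotient.mk (Ideal.span {f}) ((X - C α) ^ n) = 0 :=
      Ideal.Quotient.eq_zero_iff_mem.mpr (Ideal.mem_span_singleton.mpr hdvd)
    -- `α` is a root of the `k`-th Hasse derivative
    have hev : (hasseDeriv k f).eval α = 0 := by
      rw [← taylor_coeff, hf, taylor_mul, taylor_C]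
      have h3 : taylor α ((X - C α : K[X]) ^ n) = X ^ n := by
        simp [taylor_apply, pow_comp, sub_comp]
      rw [h3, coeff_C_mul, coeff_X_pow, if_neg hk.ne, mul_zero]
    obtain ⟨g, hg⟩ := dvd_iff_isRoot.mpr hev
    refine ⟨n, ?_⟩
    rw [hg, map_mul, mul_pow, ← map_pow, ht, zero_mul]
end

section
/- Let R be a commutative ring, n a natural number, and y₁, …, yₙ ∈ R. Set F = ∏_{i=1}^n (X − yᵢ) ∈ R[X]. Then for every k with 0 ≤ k ≤ n, the k-th Hasse derivative of F is Δ^k F = ∑_{S ⊆ {1,…,n}, |S| = n−k} ∏_{i ∈ S} (X − yᵢ); that is, Δ^k F equals the (n−k)-th elementary symmetric polynomial of the linear factors X − y₁, …, X − yₙ. -/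
open Polynomial Finset

lemma hasseDeriv_X_sub_C_mul {R : Type*} [CommRing R] (a : R) (p : R[X]) (j : ℕ) :
    Polynomial.hasseDeriv (j + 1) ((X - C a) * p) =
      (X - C a) * Polynomial.hasseDeriv (j + 1) p + Polynomial.hasseDeriv j p := by
  rw [hasseDeriv_mul, Finset.Nat.sum_antidiagonal_eq_sum_range_succ_mk]
  rw [Finset.sum_range_succ', Finset.sum_range_succ']
  have h0 : ∀ i, hasseDeriv (i + 1 + 1) (X - C a) = 0 := by
    intro i
    rw [map_sub, hasseDeriv_X _ (by omega), hasseDeriv_C _ _ (by omega), sub_zero]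
  simp only [h0, zero_mul, Finset.sum_const_zero, zero_add, hasseDeriv_zero',
    hasseDeriv_one', derivative_sub, derivative_X, derivative_C, sub_zero, one_mul]
  ring_nf
  simp only [Nat.sub_zero, Nat.add_sub_cancel_left]
  abel

lemma aux_hasseDeriv_prod {R : Type*} [CommRing R] {ι : Type*} [DecidableEq ι]
    (y : ι → R) (s : Finset ι) :
    ∀ k ≤ s.card, Polynomial.hasseDeriv k (∏ i ∈ s, (X - C (y i))) =
      ∑ S ∈ Finset.powersetCard (s.card - k) s, ∏ i ∈ S, (X - C (y i)) := by
  induction s using Finset.induction_on with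
  | empty =>
    intro k hk
    simp only [Finset.card_empty, Nat.le_zero] at hk
    subst hk
    simp
  | @insert a s ha ih =>
    intro k hk
    rw [Finset.prod_insert ha]
    rw [Finset.card_insert_of_notMem ha] at hk ⊢
    match k with
    | 0 =>
      rw [hasseDeriv_zero', Nat.sub_zero, ← Finset.card_insert_of_notMem ha,
        Finset.powersetCard_self, Finset.sum_singleton, Finset.prod_insert ha]
    | (j+1) =>
      rw [hasseDeriv_X_sub_C_mul]
      have hj : j ≤ s.card := by omega
      rw [ih j hj]
      rcases Nat.lt_or_ge j s.card with hjlt | hjge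
      · -- j < s.card, so j+1 ≤ s.card
        rw [ih (j+1) (by omega)]
        have hm : s.card + 1 - (j + 1) = (s.card - (j+1)) + 1 := by omega
        rw [hm, Finset.powersetCard_succ_insert ha]
        rw [Finset.sum_union]
        · have him : ∑ S ∈ (Finset.powersetCard (s.card - (j+1)) s).image (insert a),
              ∏ i ∈ S, (X - C (y i)) =
              (X - C (y a)) * ∑ S ∈ Finset.powersetCard (s.card - (j+1)) s,
                ∏ i ∈ S, (X - C (y i)) := by
            rw [Finset.sum_image, Finset.mul_sum]
            · refine Finset.sum_congr rfl fun S hS => ?_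
              rw [Finset.prod_insert]
              intro haS
              exact ha ((Finset.mem_powersetCard.mp hS).1 haS)
            · intro S hS T hT hST
              have haS : a ∉ S := fun h => ha ((Finset.mem_powersetCard.mp hS).1 h)
              have haT : a ∉ T := fun h => ha ((Finset.mem_powersetCard.mp hT).1 h)
              rw [← Finset.erase_insert haS, ← Finset.erase_insert haT, hST]
          rw [him]
          have : (s.card - (j+1)).succ = s.card - j := by omega
          rw [this]
          ring
        · rw [Finset.disjoint_left]
          intro S hS hS'
          obtain ⟨T, hT, rfl⟩ := Finset.mem_image.mp hS'
          exact ha ((Finset.mem_powersetCard.mp hS).1 (Finset.mem_insert_self a T))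
      · -- j = s.card
        have hje : j = s.card := le_antisymm (by omega) hjge
        have hz : Polynomial.hasseDeriv (j+1) (∏ i ∈ s, (X - C (y i))) = 0 := by
          apply hasseDeriv_eq_zero_of_lt_natDegree
          calc (∏ i ∈ s, (X - C (y i))).natDegree ≤ ∑ i ∈ s, (X - C (y i)).natDegree :=
            natDegree_prod_le _ _
          _ ≤ s.card := by
            apply le_trans (Finset.sum_le_card_nsmul _ _ 1 fun i _ => natDegree_X_sub_C_le _)
            simp
          _ < j + 1 := by omega
        rw [hz, mul_zero, zero_add, hje]
        simp

/-- Let `R` be a commutative ring, `y₁, …, yₙ ∈ R`, and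
`F = ∏ᵢ (X − yᵢ)`.  For every `k ≤ n`, the `k`-th Hasse derivative of `F` is the
`(n−k)`-th elementary symmetric polynomial of the linear factors `X − yᵢ`, i.e.
`Δ^k F = ∑_{S ⊆ {1,…,n}, |S| = n−k} ∏_{i ∈ S} (X − yᵢ)`. -/
theorem hasseDeriv_prod_X_sub_C {R : Type*} [CommRing R] (n : ℕ) (y : Fin n → R)
    (k : ℕ) (hk : k ≤ n) :
    Polynomial.hasseDeriv k (∏ i, (Polynomial.X - Polynomial.C (y i))) =
      ∑ S ∈ Finset.powersetCard (n - k) (Finset.univ : Finset (Fin n)),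
        ∏ i ∈ S, (Polynomial.X - Polynomial.C (y i)) := by
  have := aux_hasseDeriv_prod y (Finset.univ : Finset (Fin n)) k (by simpa using hk)
  simpa using this
end

section
/- Let k be a field and n ≥ 1, and let F_n be the universal monic polynomial of degree n. Then the set of elements of k[Y₁,…,Yₙ][X] of the form g(X − Y₁, …, X − Yₙ), where g ranges over the symmetric polynomials in n variables over k, is exactly the k-subalgebra of k[Y₁,…,Yₙ][X] generated by the Hasse derivatives Δ^k F_n for 0 ≤ k ≤ n−1 (where Δ⁰ F_n = F_n). -/
open Polynomial

lemma my_hasseDeriv_map {R S : Type*} [CommSemiring R] [CommSemiring S] (f : R →+* S)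
    (j : ℕ) (p : R[X]) :
    Polynomial.hasseDeriv j (p.map f) = (Polynomial.hasseDeriv j p).map f := by
  ext m
  simp [Polynomial.hasseDeriv_coeff, Polynomial.coeff_map]

lemma my_hasseDeriv_prod (R : Type*) [CommRing R] (n : ℕ) (y : Fin n → R) (j : ℕ) (hj : j ≤ n) :
    Polynomial.hasseDeriv j (∏ i : Fin n, (Polynomial.X - Polynomial.C (y i)))
      = ((Finset.univ.val.map fun i : Fin n =>
          (Polynomial.X - Polynomial.C (y i) : R[X]))).esymm (n - j) := by
  set w : Fin n → R[X] := fun i => Polynomial.X - Polynomial.C (y i) with hw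
  set F : R[X] := ∏ i : Fin n, w i with hF
  have key : Polynomial.taylor (Polynomial.X : R[X]) (F.map (Polynomial.C : R →+* R[X]))
      = (Finset.univ.val.map fun i : Fin n =>
          (Polynomial.X + Polynomial.C (w i))).prod := by
    rw [taylor_apply, hF, Polynomial.map_prod, Polynomial.prod_comp, ← Finset.prod_map_val]
    refine Finset.prod_congr rfl fun i _ => ?_
    simp only [hw, Polynomial.map_sub, Polynomial.map_X, Polynomial.map_C, sub_comp, X_comp,
      C_comp, map_sub]
    ring
  have h1 : (Polynomial.taylor (Polynomial.X : R[X]) (F.map (Polynomial.C : R →+* R[X]))).coeff j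
      = Polynomial.hasseDeriv j F := by
    rw [taylor_coeff, my_hasseDeriv_map, Polynomial.eval_map, Polynomial.eval₂_C_X]
  have h2 : ((Finset.univ.val.map fun i : Fin n =>
      (Polynomial.X + Polynomial.C (w i))).prod).coeff j
        = (Finset.univ.val.map w).esymm (n - j) := by
    have := Multiset.prod_X_add_C_coeff' (Finset.univ.val) w (k := j) (by simpa using hj)
    simpa using this
  rw [← h1, key, h2]


/-- Let `k` be a field, `n ≥ 1`, and let `Fₙ = ∏ᵢ (X − Yᵢ)` be the universal
monic polynomial of degree `n` in `k[Y₁,…,Yₙ][X]`.  The set of elements of `k[Y₁,…,Yₙ][X]` of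
the form `g(X − Y₁, …, X − Yₙ)` with `g` a symmetric polynomial in `n` variables over `k` is
exactly the `k`-subalgebra of `k[Y₁,…,Yₙ][X]` generated by the Hasse derivatives `Δ^j Fₙ`
for `0 ≤ j ≤ n − 1` (with `Δ⁰ Fₙ = Fₙ`). -/
theorem symm_in_X_sub_Y_eq_adjoin_hasseDeriv_universal {k : Type*} [Field k]
    (n : ℕ) (hn : 1 ≤ n) :
    {p : Polynomial (MvPolynomial (Fin n) k) |
        ∃ g : MvPolynomial (Fin n) k, g.IsSymmetric ∧
          MvPolynomial.aeval
            (fun i : Fin n => Polynomial.X - Polynomial.C (MvPolynomial.X i)) g = p} =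
      (Algebra.adjoin k
        {q : Polynomial (MvPolynomial (Fin n) k) | ∃ j, j < n ∧
          q = Polynomial.hasseDeriv j
                (∏ i : Fin n, (Polynomial.X - Polynomial.C (MvPolynomial.X i)))} :
        Subalgebra k (Polynomial (MvPolynomial (Fin n) k))) := by
  classical
  set w : Fin n → Polynomial (MvPolynomial (Fin n) k) :=
    fun i => Polynomial.X - Polynomial.C (MvPolynomial.X i) with hw
  set φ : MvPolynomial (Fin n) k →ₐ[k] Polynomial (MvPolynomial (Fin n) k) :=
    MvPolynomial.aeval w with hφ
  set S : Set (MvPolynomial (Fin n) k) :=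
    Set.range (fun i : Fin n => MvPolynomial.esymm (Fin n) k (i + 1)) with hS
  have hkey : ∀ j ≤ n, Polynomial.hasseDeriv j (∏ i : Fin n, w i)
      = φ (MvPolynomial.esymm (Fin n) k (n - j)) := by
    intro j hj
    rw [my_hasseDeriv_prod _ n (fun i => MvPolynomial.X i) j hj, hφ]
    exact (MvPolynomial.aeval_esymm_eq_multiset_esymm (σ := Fin n) (R := k) (n - j) w).symm
  have hgen : {q : Polynomial (MvPolynomial (Fin n) k) | ∃ j, j < n ∧
      q = Polynomial.hasseDeriv j (∏ i : Fin n, w i)} = φ '' S := by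
    ext q
    simp only [Set.mem_setOf_eq, Set.mem_image, hS, Set.mem_range, exists_exists_eq_and]
    constructor
    · rintro ⟨j, hjn, rfl⟩
      refine ⟨⟨n - j - 1, by omega⟩, ?_⟩
      rw [hkey j hjn.le]
      congr 2
      simp only []
      omega
    · rintro ⟨i, rfl⟩
      have hi := i.isLt
      refine ⟨n - (i + 1), by omega, ?_⟩
      rw [hkey (n - (i + 1)) (by omega)]
      congr 2
      omega
  have hsym : MvPolynomial.symmetricSubalgebra (Fin n) k = Algebra.adjoin k S := by
    apply le_antisymm
    · rintro p hp
      obtain ⟨q, hq⟩ := MvPolynomial.esymmAlgHom_fin_surjective (R := k) (n := n) le_rfl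
        (⟨p, hp⟩ : MvPolynomial.symmetricSubalgebra (Fin n) k)
      have hq' : MvPolynomial.aeval
          (fun i : Fin n => MvPolynomial.esymm (Fin n) k (i + 1)) q = p := by
        rw [← MvPolynomial.esymmAlgHom_apply, hq]
      rw [hS, Algebra.adjoin_range_eq_range_aeval]
      exact ⟨q, hq'⟩
    · rw [Algebra.adjoin_le_iff]
      rintro _ ⟨i, rfl⟩
      exact (MvPolynomial.mem_symmetricSubalgebra _).2 (MvPolynomial.esymm_isSymmetric _ _ _)
  rw [hgen, ← AlgHom.map_adjoin, ← hsym]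
  ext p
  simp only [Set.mem_setOf_eq, Subalgebra.coe_map, Set.mem_image, SetLike.mem_coe,
    MvPolynomial.mem_symmetricSubalgebra]
end

section
/- Let k be a field and n ≥ 1. Inside the polynomial ring k[Y₁,…,Yₙ], let A₁ be the subalgebra consisting of those elements of the k-subalgebra generated by the differences Yᵢ − Yⱼ (1 ≤ i, j ≤ n) that are invariant under all permutations of Y₁,…,Yₙ, and let A₂ be the k-subalgebra generated by the elementary symmetric polynomials e_j(Y₁ − Y₂, Y₁ − Y₃, …, Y₁ − Yₙ) for 1 ≤ j ≤ n−1. Then A₁ ⊆ A₂ and A₁ and A₂ have the same integral closure in k[Y₁,…,Yₙ]; in particular every element of A₂ is integral over A₁. -/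
open MvPolynomial Polynomial

lemma aux_closure_eq {k R : Type*} [CommRing k] [CommRing R] [Algebra k R]
    {A B : Subalgebra k R} (hle : A ≤ B) (hint : ∀ b ∈ B, IsIntegral ↥A b) :
    (integralClosure ↥A R : Set R) = (integralClosure ↥B R : Set R) := by
  letI : Algebra ↥A ↥B := (Subalgebra.inclusion hle).toAlgebra
  haveI : IsScalarTower ↥A ↥B R := IsScalarTower.of_algebraMap_eq (fun x => rfl)
  haveI : Algebra.IsIntegral ↥A ↥B :=
    ⟨fun b => by
      have hinj : Function.Injective (algebraMap ↥B R) := Subtype.val_injective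
      exact IsIntegral.tower_bot (B := R) hinj (hint b.1 b.2)⟩
  ext x
  constructor
  · intro hx; exact IsIntegral.tower_top (A := ↥B) hx
  · intro hx; exact isIntegral_trans x hx


set_option synthInstance.maxHeartbeats 1000000
set_option maxHeartbeats 1000000

lemma aux_integral_over_invariants {k : Type*} [CommRing k] {n : ℕ}
    (x : MvPolynomial (Fin n) k)
    (hxD : x ∈ Algebra.adjoin k
      {q : MvPolynomial (Fin n) k | ∃ i j : Fin n, q = X i - X j}) :
    IsIntegral
      (R := ↥(Algebra.adjoin k
          {q : MvPolynomial (Fin n) k | ∃ i j : Fin n, q = X i - X j}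
        ⊓ symmetricSubalgebra (Fin n) k)) x := by
  set S : Set (MvPolynomial (Fin n) k) := {q | ∃ i j : Fin n, q = X i - X j} with hS
  set D := Algebra.adjoin k S with hD
  set A := D ⊓ symmetricSubalgebra (Fin n) k with hA
  -- D is stable under renaming
  have hD_stable : ∀ (σ : Equiv.Perm (Fin n)), ∀ y ∈ D, rename ⇑σ y ∈ D := by
    intro σ y hy
    have h1 : D.map (rename (R := k) ⇑σ) ≤ D := by
      rw [hD, AlgHom.map_adjoin]
      apply Algebra.adjoin_mono
      rintro _ ⟨q, ⟨i, j, rfl⟩, rfl⟩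
      exact ⟨σ i, σ j, by rw [map_sub, rename_X, rename_X]⟩
    exact h1 ⟨y, hy, rfl⟩
  set f : Equiv.Perm (Fin n) → MvPolynomial (Fin n) k := fun σ => rename ⇑σ x with hf
  have hfD : ∀ σ, f σ ∈ D := fun σ => hD_stable σ x hxD
  set P : Polynomial (MvPolynomial (Fin n) k) :=
    ∏ σ : Equiv.Perm (Fin n), (Polynomial.X - Polynomial.C (f σ)) with hP
  have hmonic : P.Monic :=
    monic_prod_of_monic _ _ fun σ _ => monic_X_sub_C _
  have heval : P.eval x = 0 := by
    rw [hP, Polynomial.eval_prod]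
    apply Finset.prod_eq_zero (Finset.mem_univ (1 : Equiv.Perm (Fin n)))
    simp [hf, rename_id]
  -- coefficients of P lie in D
  have hcoeffD : ∀ i, P.coeff i ∈ D := by
    intro i
    set Q : Polynomial ↥D := ∏ σ : Equiv.Perm (Fin n),
      (Polynomial.X - Polynomial.C (⟨f σ, hfD σ⟩ : ↥D)) with hQ
    have hQP : Q.map (D.val : ↥D →+* MvPolynomial (Fin n) k) = P := by
      rw [hQ, hP, Polynomial.map_prod]
      refine Finset.prod_congr rfl fun σ _ => ?_
      rw [Polynomial.map_sub, Polynomial.map_X, Polynomial.map_C]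
      rfl
    rw [← hQP, Polynomial.coeff_map]
    exact (Q.coeff i).2
  -- coefficients of P are symmetric
  have hcoeffS : ∀ i, P.coeff i ∈ symmetricSubalgebra (Fin n) k := by
    intro i
    rw [mem_symmetricSubalgebra]
    intro τ
    have hmap : P.map ((rename (R := k) ⇑τ) : _ →ₐ[k] _).toRingHom = P := by
      rw [hP, Polynomial.map_prod]
      have : ∀ σ : Equiv.Perm (Fin n),
          (Polynomial.X - Polynomial.C (f σ)).map
            ((rename (R := k) ⇑τ) : _ →ₐ[k] _).toRingHom
          = Polynomial.X - Polynomial.C (f (τ * σ)) := by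
        intro σ
        rw [Polynomial.map_sub, Polynomial.map_X, Polynomial.map_C]
        have h2 : rename (R := k) ⇑τ (rename ⇑σ x) = rename ⇑(τ * σ) x := by
          rw [rename_rename]; rfl
        show Polynomial.X - Polynomial.C (rename ⇑τ (rename ⇑σ x)) = _
        rw [h2]
      rw [Finset.prod_congr rfl fun σ _ => this σ]
      exact Equiv.prod_comp (Equiv.mulLeft τ) (fun σ => Polynomial.X - Polynomial.C (f σ))
    conv_rhs => rw [← hmap]
    rw [Polynomial.coeff_map]
    rfl
  have hcoeffA : ∀ c ∈ P.coeffs, c ∈ A.toSubring := by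
    intro c hc
    rw [Polynomial.mem_coeffs_iff] at hc
    obtain ⟨m, hm1, rfl⟩ := hc
    exact ⟨hcoeffD m, hcoeffS m⟩
  refine ⟨P.toSubring A.toSubring hcoeffA, (P.monic_toSubring _ _).mpr hmonic, ?_⟩
  rw [Polynomial.eval₂_eq_eval_map]
  have : (P.toSubring A.toSubring hcoeffA).map (algebraMap ↥A (MvPolynomial (Fin n) k)) = P :=
    P.map_toSubring A.toSubring hcoeffA
  rw [this, heval]


/-- The equivalence between `Fin (n-1)` and the nonzero elements of `Fin n`. -/
def auxFinEquiv {n : ℕ} (hn : 1 ≤ n) : Fin (n - 1) ≃ {i : Fin n // (i : ℕ) ≠ 0} where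
  toFun i := ⟨⟨(i : ℕ) + 1, by have := i.2; omega⟩, Nat.succ_ne_zero _⟩
  invFun i := ⟨(i.1 : ℕ) - 1, by have := i.1.2; have := i.2; omega⟩
  left_inv i := Fin.ext (by show (i : ℕ) + 1 - 1 = i; omega)
  right_inv i := Subtype.ext (Fin.ext (by have := i.2; show (i.1 : ℕ) - 1 + 1 = i.1; omega))

/-- Extend a permutation of `Fin (n-1)` to a permutation of `Fin n` fixing `0`. -/
def auxExtPerm {n : ℕ} (hn : 1 ≤ n) (e : Equiv.Perm (Fin (n - 1))) : Equiv.Perm (Fin n) :=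
  e.extendDomain (auxFinEquiv hn)

lemma auxExtPerm_zero {n : ℕ} (hn : 1 ≤ n) (e : Equiv.Perm (Fin (n - 1))) :
    auxExtPerm hn e (⟨0, hn⟩ : Fin n) = (⟨0, hn⟩ : Fin n) :=
  Equiv.Perm.extendDomain_apply_not_subtype e (auxFinEquiv hn) (by simp)

lemma auxExtPerm_succ {n : ℕ} (hn : 1 ≤ n) (e : Equiv.Perm (Fin (n - 1))) (i : Fin (n - 1)) :
    auxExtPerm hn e (⟨(i : ℕ) + 1, by have := i.2; omega⟩ : Fin n)
      = (⟨((e i : Fin (n - 1)) : ℕ) + 1, by have := (e i).2; omega⟩ : Fin n) := by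
  have h : (⟨(i : ℕ) + 1, by have := i.2; omega⟩ : Fin n) = ((auxFinEquiv hn) i : {i : Fin n // (i : ℕ) ≠ 0}).1 :=
    rfl
  rw [h]
  exact Equiv.Perm.extendDomain_apply_image e (auxFinEquiv hn) i
/-- Inside `k[Y₁,…,Yₙ]` (`n ≥ 1`), let `A₁` be the subalgebra of symmetric
elements of the `k`-subalgebra generated by the differences `Yᵢ − Yⱼ`, and let `A₂` be the
`k`-subalgebra generated by the elementary symmetric polynomials
`e_j(Y₁ − Y₂, …, Y₁ − Yₙ)` for `1 ≤ j ≤ n − 1`.  Then `A₁ ⊆ A₂`, the two subalgebras have the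
same integral closure in `k[Y₁,…,Yₙ]`, and in particular every element of `A₂` is integral
over `A₁`. -/
theorem invariant_diff_subalgebra_integral_closure {k : Type*} [Field k] (n : ℕ) (hn : 1 ≤ n)
    (A₁ A₂ : Subalgebra k (MvPolynomial (Fin n) k))
    (hA₁ : A₁ =
      Algebra.adjoin k
          {q : MvPolynomial (Fin n) k | ∃ i j : Fin n, q = MvPolynomial.X i - MvPolynomial.X j}
        ⊓ MvPolynomial.symmetricSubalgebra (Fin n) k)
    (hA₂ : A₂ = Algebra.adjoin k
      {q : MvPolynomial (Fin n) k | ∃ j, 1 ≤ j ∧ j ≤ n - 1 ∧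
        q = MvPolynomial.aeval
              (fun i : Fin (n - 1) =>
                MvPolynomial.X (⟨0, hn⟩ : Fin n) -
                  MvPolynomial.X (⟨(i : ℕ) + 1, by omega⟩ : Fin n))
              (MvPolynomial.esymm (Fin (n - 1)) k j)}) :
    A₁ ≤ A₂ ∧
      (integralClosure ↥A₁ (MvPolynomial (Fin n) k) : Set (MvPolynomial (Fin n) k)) =
        (integralClosure ↥A₂ (MvPolynomial (Fin n) k) : Set (MvPolynomial (Fin n) k)) ∧
      ∀ x ∈ A₂, IsIntegral ↥A₁ x := by
  classical
  set m := n - 1 with hm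
  set Z : Fin m → MvPolynomial (Fin n) k := fun i =>
    MvPolynomial.X (⟨0, hn⟩ : Fin n) - MvPolynomial.X (⟨(i : ℕ) + 1, by omega⟩ : Fin n) with hZ
  set φ : MvPolynomial (Fin m) k →ₐ[k] MvPolynomial (Fin n) k := aeval Z with hφ
  set S : Set (MvPolynomial (Fin n) k) :=
    {q | ∃ i j : Fin n, q = MvPolynomial.X i - MvPolynomial.X j} with hSdef
  set D := Algebra.adjoin k S with hDdef
  -- φ is injective
  have hφinj : Function.Injective φ := by
    set w : Fin n → MvPolynomial (Fin m) k := fun i =>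
      if h : (i : ℕ) = 0 then 0 else -MvPolynomial.X (⟨(i : ℕ) - 1, by omega⟩ : Fin m) with hw
    set ψ : MvPolynomial (Fin n) k →ₐ[k] MvPolynomial (Fin m) k := aeval w with hψ
    have hcomp : ∀ q, ψ (φ q) = q := by
      intro q
      have h1 : ψ.comp φ = AlgHom.id k (MvPolynomial (Fin m) k) := by
        apply MvPolynomial.algHom_ext
        intro i
        simp only [AlgHom.comp_apply, hφ, MvPolynomial.aeval_X, hZ, map_sub, hψ, hw,
          AlgHom.id_apply]
        rw [dif_pos trivial, dif_neg (by omega), zero_sub, neg_neg]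
        congr 1
      exact AlgHom.congr_fun h1 q
    intro a b hab
    rw [← hcomp a, ← hcomp b, hab]
  -- D is the range of φ
  have hrange : D = φ.range := by
    apply le_antisymm
    · rw [hDdef]
      apply Algebra.adjoin_le
      rintro q ⟨i, j, rfl⟩
      set v : Fin n → MvPolynomial (Fin m) k := fun i =>
        if h : (i : ℕ) = 0 then 0 else MvPolynomial.X (⟨(i : ℕ) - 1, by omega⟩ : Fin m) with hv
      have hφv : ∀ i : Fin n, φ (v i) = MvPolynomial.X (⟨0, hn⟩ : Fin n) - MvPolynomial.X i := by
        rintro ⟨iv, hiv⟩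
        by_cases h : iv = 0
        · rw [hv]
          simp only [dif_pos h, map_zero]
          have h2 : (⟨iv, hiv⟩ : Fin n) = (⟨0, hn⟩ : Fin n) := Fin.ext h
          rw [h2, sub_self]
        · rw [hv]
          simp only [dif_neg h]
          rw [hφ]
          rw [MvPolynomial.aeval_X, hZ]
          have hfin : (⟨(((⟨iv - 1, by omega⟩ : Fin m)) : ℕ) + 1, by omega⟩ : Fin n)
              = (⟨iv, hiv⟩ : Fin n) := Fin.ext (by show iv - 1 + 1 = iv; omega)
          beta_reduce
          rw [hfin]
      refine ⟨v j - v i, ?_⟩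
      show φ (v j - v i) = _
      rw [map_sub, hφv, hφv]
      ring
    · have key : Algebra.adjoin k (Set.range Z) = (MvPolynomial.aeval (R := k) Z).range :=
        Algebra.adjoin_range_eq_range_aeval k Z
      rw [hφ, ← key, hDdef]
      apply Algebra.adjoin_mono
      rintro _ ⟨i, rfl⟩
      exact ⟨⟨0, hn⟩, ⟨(i : ℕ) + 1, by omega⟩, rfl⟩
  -- A₂ is contained in D
  have hA₂D : A₂ ≤ D := by
    rw [hA₂, hrange]
    apply Algebra.adjoin_le
    rintro q ⟨j, hj1, hj2, rfl⟩
    exact ⟨MvPolynomial.esymm (Fin m) k j, rfl⟩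
  -- A₁ ≤ A₂
  have h12 : A₁ ≤ A₂ := by
    intro p hp
    rw [hA₁, Algebra.mem_inf] at hp
    obtain ⟨hpD, hpS⟩ := hp
    obtain ⟨q, rfl⟩ := (hrange.le : D ≤ φ.range) hpD
    -- q is symmetric
    have hqsym : q ∈ MvPolynomial.symmetricSubalgebra (Fin m) k := by
      rw [MvPolynomial.mem_symmetricSubalgebra]
      intro e
      apply hφinj
      have hcomm : (MvPolynomial.rename (R := k) ⇑(auxExtPerm hn e)).comp φ
          = φ.comp (MvPolynomial.rename (R := k) ⇑e) := by
        apply MvPolynomial.algHom_ext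
        intro i
        simp only [AlgHom.comp_apply, MvPolynomial.rename_X, hφ, MvPolynomial.aeval_X, hZ,
          map_sub]
        rw [auxExtPerm_zero hn e, auxExtPerm_succ hn e i]
      have hc := AlgHom.congr_fun hcomm q
      simp only [AlgHom.comp_apply] at hc
      rw [← hc]
      exact (MvPolynomial.mem_symmetricSubalgebra _).mp hpS (auxExtPerm hn e)
    -- use the fundamental theorem of symmetric polynomials
    obtain ⟨r, hr⟩ := MvPolynomial.esymmAlgHom_surjective (σ := Fin m) (R := k) (n := m)
      (by simp) ⟨q, hqsym⟩
    have hq : q = aeval (fun i : Fin m => MvPolynomial.esymm (Fin m) k ((i : ℕ) + 1)) r := by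
      have := congrArg Subtype.val hr
      rw [MvPolynomial.esymmAlgHom_apply] at this
      exact this.symm
    have hpval : φ q = aeval (fun i : Fin m => φ (MvPolynomial.esymm (Fin m) k ((i : ℕ) + 1))) r := by
      rw [hq, MvPolynomial.comp_aeval_apply]
    show φ q ∈ A₂
    rw [hA₂, hpval]
    have hsub : Set.range (fun i : Fin m => φ (MvPolynomial.esymm (Fin m) k ((i : ℕ) + 1)))
        ⊆ {q : MvPolynomial (Fin n) k | ∃ j, 1 ≤ j ∧ j ≤ n - 1 ∧
          q = MvPolynomial.aeval
              (fun i : Fin (n - 1) =>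
                MvPolynomial.X (⟨0, hn⟩ : Fin n) -
                  MvPolynomial.X (⟨(i : ℕ) + 1, by omega⟩ : Fin n))
              (MvPolynomial.esymm (Fin (n - 1)) k j)} := by
      rintro _ ⟨i, rfl⟩
      exact ⟨(i : ℕ) + 1, by omega, by omega, rfl⟩
    have : aeval (fun i : Fin m => φ (MvPolynomial.esymm (Fin m) k ((i : ℕ) + 1))) r
        ∈ Algebra.adjoin k
          (Set.range (fun i : Fin m => φ (MvPolynomial.esymm (Fin m) k ((i : ℕ) + 1)))) := by
      rw [Algebra.adjoin_range_eq_range_aeval]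
      exact ⟨r, rfl⟩
    exact Algebra.adjoin_mono hsub this
  -- every element of A₂ is integral over A₁
  have hint : ∀ x ∈ A₂, IsIntegral ↥A₁ x := by
    intro x hx
    rw [hA₁]
    exact aux_integral_over_invariants x (hA₂D hx)
  exact ⟨h12, aux_closure_eq h12 hint, hint⟩
end

section
/- Let B be a Noetherian commutative ring, let f₁,…,f_s ∈ B and let n₁,…,n_s be positive integers. Let G = B[f₁X^{n₁},…,f_sX^{n_s}] ⊆ B[X] be the B-subalgebra generated by the elements fᵢ·X^{nᵢ}. Let N be a common multiple of n₁,…,n_s and let A ⊆ B[X] be the B-subalgebra generated by all elements (∏ᵢ fᵢ^{aᵢ})·X^N where a₁,…,a_s are natural numbers with ∑ᵢ aᵢnᵢ = N. Then A ⊆ G and G is a finite A-module. -/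
/-- Let `B` be a Noetherian commutative ring, `f₁,…,f_s ∈ B`, and
`n₁,…,n_s` positive integers.  Let `G = B[f₁X^{n₁},…,f_sX^{n_s}] ⊆ B[X]`, let `N` be a
common multiple of the `nᵢ`, and let `A ⊆ B[X]` be the `B`-subalgebra generated by all
`(∏ᵢ fᵢ^{aᵢ})·X^N` with `∑ᵢ aᵢnᵢ = N`.  Then `A ⊆ G` and `G` is a finite `A`-module. -/
theorem rees_algebra_finite_over_degree_N_part {B : Type*} [CommRing B] [IsNoetherianRing B]
    (s : ℕ) (f : Fin s → B) (n : Fin s → ℕ) (hn : ∀ i, 0 < n i)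
    (N : ℕ) (hNpos : 0 < N) (hN : ∀ i, n i ∣ N)
    (G A : Subalgebra B (Polynomial B))
    (hG : G = Algebra.adjoin B
      {p : Polynomial B | ∃ i : Fin s, p = Polynomial.C (f i) * Polynomial.X ^ n i})
    (hA : A = Algebra.adjoin B
      {p : Polynomial B | ∃ a : Fin s → ℕ, (∑ i, a i * n i) = N ∧
        p = Polynomial.C (∏ i, f i ^ a i) * Polynomial.X ^ N}) :
    ∃ hAG : A ≤ G, RingHom.Finite (Subalgebra.inclusion hAG).toRingHom := by
  classical
  have hAG : A ≤ G := by
    rw [hA, hG]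
    apply Algebra.adjoin_le
    rintro p ⟨a, hsum, rfl⟩
    have hp : Polynomial.C (∏ i, f i ^ a i) * Polynomial.X ^ N
        = ∏ i, (Polynomial.C (f i) * Polynomial.X ^ n i) ^ a i := by
      rw [← hsum, map_prod,
        show (∑ i, a i * n i) = ∑ i, n i * a i from by simp [mul_comm]]
      simp only [mul_pow, ← Polynomial.C_pow, ← pow_mul, Finset.prod_mul_distrib,
        Finset.prod_pow_eq_pow_sum]
    rw [hp]
    exact Subalgebra.prod_mem _ fun i _ =>
      Subalgebra.pow_mem _ (Algebra.subset_adjoin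
        (show (Polynomial.C (f i) * Polynomial.X ^ n i) ∈
          {p : Polynomial B | ∃ j : Fin s, p = Polynomial.C (f j) * Polynomial.X ^ n j}
          from ⟨i, rfl⟩)) _
  refine ⟨hAG, ?_⟩
  set ι := (Subalgebra.inclusion hAG).toRingHom with hι
  -- finite type
  have hft : ι.FiniteType := by
    apply RingHom.FiniteType.of_comp_finiteType (f := algebraMap B A)
    have : (ι.comp (algebraMap B A)) = algebraMap B G := by
      ext x
      rfl
    rw [this]
    have hGfg : G.FG := by
      rw [hG]
      have : {p : Polynomial B | ∃ i : Fin s, p = Polynomial.C (f i) * Polynomial.X ^ n i}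
          = ↑((Finset.univ : Finset (Fin s)).image
              fun i => Polynomial.C (f i) * Polynomial.X ^ n i) := by
        ext p
        simp [eq_comm]
      rw [this]
      exact Subalgebra.fg_adjoin_finset _
    have hGft : Algebra.FiniteType B ↥G := (Subalgebra.fg_iff_finiteType G).mp hGfg
    have heq : (algebraMap B ↥G).toAlgebra = (inferInstance : Algebra B ↥G) :=
      Algebra.algebra_ext _ _ fun r => rfl
    show @Algebra.FiniteType B ↥G _ _ (algebraMap B ↥G).toAlgebra
    rw [heq]; exact hGft
  -- integrality
  have hint_amb : ∀ x ∈ G, IsIntegral A x := by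
    intro x hx
    rw [hG] at hx
    have hle : Algebra.adjoin B
        {p : Polynomial B | ∃ i : Fin s, p = Polynomial.C (f i) * Polynomial.X ^ n i}
        ≤ Subalgebra.restrictScalars B (integralClosure A (Polynomial B)) := by
      apply Algebra.adjoin_le
      rintro p ⟨i, rfl⟩
      show IsIntegral A (Polynomial.C (f i) * Polynomial.X ^ n i)
      have hk : 0 < N / n i := Nat.div_pos (Nat.le_of_dvd hNpos (hN i)) (hn i)
      apply IsIntegral.of_pow hk
      have hmem : (Polynomial.C (f i) * Polynomial.X ^ n i) ^ (N / n i) ∈ A := by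
        rw [hA]
        apply Algebra.subset_adjoin
        refine ⟨Pi.single i (N / n i), ?_, ?_⟩
        · rw [Finset.sum_eq_single i]
          · simp [Nat.div_mul_cancel (hN i)]
          · intro j _ hj; simp [Pi.single_apply, hj]
          · simp
        · have hprod : (∏ j, f j ^ Pi.single i (N / n i) j) = f i ^ (N / n i) := by
            rw [Finset.prod_eq_single i]
            · simp
            · intro j _ hj; simp [Pi.single_apply, hj]
            · simp
          rw [hprod, mul_pow, ← Polynomial.C_pow, ← pow_mul, Nat.mul_div_cancel' (hN i)]
      exact isIntegral_algebraMap (x := (⟨_, hmem⟩ : A))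
    exact hle hx
  have hint : ι.IsIntegral := by
    intro y
    obtain ⟨p, pmonic, hev⟩ := hint_amb (y : Polynomial B) y.2
    refine ⟨p, pmonic, ?_⟩
    have hinj : Function.Injective (G.val : G →+* Polynomial B) := Subtype.val_injective
    apply hinj
    rw [Polynomial.hom_eval₂, map_zero]
    have : (G.val : G →+* Polynomial B).comp ι = algebraMap A (Polynomial B) := by
      ext a; rfl
    rw [this, ← Polynomial.aeval_def]
    exact hev
  exact hint.to_finite hft
end

section
/- Let B be a Noetherian commutative ring and let (I_n)_{n≥0} be a Rees family on B, with associated subalgebra G ⊆ B[X]. Then for all integers n, r with 1 ≤ n ≤ r and every f ∈ I_r, the element f·X^n ∈ B[X] is integral over G. -/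
/-- Let `B` be a Noetherian commutative ring, `(Iₙ)ₙ` a Rees family on `B`
(`I₀ = B`, `I_k·I_l ⊆ I_{k+l}`), and let `G ⊆ B[X]` be the associated subalgebra, consisting
of the polynomials whose `m`-th coefficient lies in `I_m` for every `m`.  Then for all
`1 ≤ n ≤ r` and every `f ∈ I_r`, the element `f·X^n` is integral over `G`. -/
theorem rees_family_high_coeff_isIntegral {B : Type*} [CommRing B] [IsNoetherianRing B]
    (I : ℕ → Ideal B) (hI0 : I 0 = ⊤) (hImul : ∀ k l : ℕ, I k * I l ≤ I (k + l))
    (G : Subalgebra B (Polynomial B))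
    (hG : ∀ p : Polynomial B, p ∈ G ↔ ∀ m : ℕ, p.coeff m ∈ I m)
    (n r : ℕ) (hn : 1 ≤ n) (hnr : n ≤ r) (f : B) (hf : f ∈ I r) :
    IsIntegral ↥G (Polynomial.C f * Polynomial.X ^ n) := by
  -- f^k ∈ I (k*r) by induction
  have hpow : ∀ k : ℕ, f ^ k ∈ I (k * r) := by
    intro k
    induction k with
    | zero => simp [hI0]
    | succ k ih =>
      have h := hImul (k * r) r (Ideal.mul_mem_mul ih hf)
      have h2 : k * r + r = (k + 1) * r := by ring
      rw [pow_succ]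
      rwa [h2] at h
  -- f^r ∈ I (n*r)
  have hfr : f ^ r ∈ I (n * r) := by
    have h1 : f ^ r = f ^ (r - n) * f ^ n := by
      rw [← pow_add]; congr 1; omega
    rw [h1]
    exact Ideal.mul_mem_left _ _ (hpow n)
  -- (C f * X^n)^r ∈ G
  have hmem : (Polynomial.C f * Polynomial.X ^ n) ^ r ∈ G := by
    rw [hG]
    intro m
    rw [mul_pow, ← Polynomial.C_pow, ← pow_mul, Polynomial.coeff_C_mul,
      Polynomial.coeff_X_pow]
    by_cases h : m = n * r
    · subst h; simpa using hfr
    · simp [h]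
  have hr : 0 < r := le_trans hn hnr
  refine IsIntegral.of_pow hr ?_
  have : (Polynomial.C f * Polynomial.X ^ n) ^ r =
      algebraMap ↥G (Polynomial B) ⟨_, hmem⟩ := rfl
  rw [this]
  exact isIntegral_algebraMap
end

section
/- Let (S, m) be a commutative local ring, let n ≥ 1, and let f = Z^n + a₁Z^{n−1} + ⋯ + a_{n−1}Z + a_n ∈ S[Z] with aᵢ ∈ m^i for every 1 ≤ i ≤ n. Let B = S[Z]/(f), let z̄ denote the class of Z in B, and let M = mB + (z̄). Then M^n = (mB)·M^{n−1}; in particular, the extended ideal mB is a reduction of the ideal M. -/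
lemma sup_pow_le_aux {R : Type*} [CommRing R] (I J : Ideal R) :
    ∀ k : ℕ, (I ⊔ J) ^ (k + 1) ≤ I * (I ⊔ J) ^ k ⊔ J ^ (k + 1) := by
  intro k
  induction k with
  | zero => simp
  | succ k ih =>
    calc (I ⊔ J) ^ (k + 2) = (I ⊔ J) ^ (k + 1) * (I ⊔ J) := pow_succ _ _
    _ = (I ⊔ J) ^ (k + 1) * I ⊔ (I ⊔ J) ^ (k + 1) * J := Ideal.mul_sup _ _ _
    _ ≤ I * (I ⊔ J) ^ (k + 1) ⊔ (I * (I ⊔ J) ^ k ⊔ J ^ (k + 1)) * J :=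
        sup_le_sup (le_of_eq (mul_comm _ _)) (Ideal.mul_mono_left ih)
    _ = I * (I ⊔ J) ^ (k + 1) ⊔ (I * ((I ⊔ J) ^ k * J) ⊔ J ^ (k + 2)) := by
        rw [Ideal.sup_mul, mul_assoc, ← pow_succ J (k+1)]
    _ ≤ I * (I ⊔ J) ^ (k + 1) ⊔ J ^ (k + 2) := by
        apply sup_le le_sup_left
        apply sup_le _ le_sup_right
        apply le_sup_of_le_left
        apply Ideal.mul_mono_right
        calc (I ⊔ J) ^ k * J ≤ (I ⊔ J) ^ k * (I ⊔ J) :=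
              Ideal.mul_mono_right le_sup_right
        _ = (I ⊔ J) ^ (k + 1) := (pow_succ _ _).symm

/-- Let `(S, m)` be a commutative local ring, `n ≥ 1`, and
`f = Z^n + a₁Z^{n−1} + ⋯ + aₙ ∈ S[Z]` with `aᵢ ∈ m^i` for all `1 ≤ i ≤ n`.  Let
`B = S[Z]/(f)`, let `z̄` be the class of `Z`, and `M = mB + (z̄)`.  Then
`M^n = (mB)·M^{n−1}`; in particular `mB` is a reduction of `M`. -/
theorem extended_maximal_ideal_reduction {S : Type*} [CommRing S] [IsLocalRing S]
    (n : ℕ) (hn : 1 ≤ n) (a : Fin n → S)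
    (ha : ∀ i : Fin n, a i ∈ IsLocalRing.maximalIdeal S ^ ((i : ℕ) + 1))
    (f : Polynomial S)
    (hf : f = Polynomial.X ^ n +
      ∑ i : Fin n, Polynomial.C (a i) * Polynomial.X ^ (n - ((i : ℕ) + 1)))
    (M mB : Ideal (Polynomial S ⧸ Ideal.span {f}))
    (hmB : mB = Ideal.map (algebraMap S (Polynomial S ⧸ Ideal.span {f}))
      (IsLocalRing.maximalIdeal S))
    (hM : M = mB ⊔ Ideal.span {Ideal.Quotient.mk (Ideal.span {f}) Polynomial.X}) :
    M ^ n = mB * M ^ (n - 1) ∧ ∃ t : ℕ, M ^ (t + 1) = mB * M ^ t := by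
  set Q := Polynomial S ⧸ Ideal.span {f} with hQ
  set z : Q := Ideal.Quotient.mk (Ideal.span {f}) Polynomial.X with hz
  set J : Ideal Q := Ideal.span {z} with hJ
  have hmBM : mB ≤ M := hM ▸ le_sup_left
  have hzM : z ∈ M := hM ▸ Ideal.mem_sup_right (Ideal.subset_span rfl)
  obtain ⟨k, hk⟩ : ∃ k, n = k + 1 := ⟨n - 1, by omega⟩
  have hk1 : n - 1 = k := by omega
  -- z^n ∈ mB * M^(n-1)
  have hzn : z ^ n ∈ mB * M ^ k := by
    have hmkf : (Ideal.Quotient.mk (Ideal.span {f})) f = 0 := by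
      rw [Ideal.Quotient.eq_zero_iff_mem]; exact Ideal.subset_span rfl
    have hXn : z ^ n =
        -∑ i : Fin n, (Ideal.Quotient.mk (Ideal.span {f})) (Polynomial.C (a i)) *
          z ^ (n - ((i : ℕ) + 1)) := by
      apply eq_neg_of_add_eq_zero_left
      have : (Ideal.Quotient.mk (Ideal.span {f})) (Polynomial.X ^ n +
          ∑ i : Fin n, Polynomial.C (a i) * Polynomial.X ^ (n - ((i : ℕ) + 1))) = 0 := by
        rw [← hf]; exact hmkf
      simpa [map_add, map_sum, map_mul, map_pow] using this
    rw [hXn]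
    apply neg_mem
    apply Ideal.sum_mem
    intro i _
    have hca : (Ideal.Quotient.mk (Ideal.span {f})) (Polynomial.C (a i)) ∈ mB ^ ((i : ℕ) + 1) := by
      have h1 : (Ideal.Quotient.mk (Ideal.span {f})) (Polynomial.C (a i)) =
          algebraMap S Q (a i) := by
        rw [IsScalarTower.algebraMap_apply S (Polynomial S) Q, Polynomial.algebraMap_eq,
          Ideal.Quotient.algebraMap_eq]
      rw [h1, hmB, ← Ideal.map_pow]
      exact Ideal.mem_map_of_mem _ (ha i)
    have hzp : z ^ (n - ((i : ℕ) + 1)) ∈ M ^ (n - ((i : ℕ) + 1)) :=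
      Ideal.pow_mem_pow hzM _
    have hle : mB ^ ((i : ℕ) + 1) * M ^ (n - ((i : ℕ) + 1)) ≤ mB * M ^ k := by
      rw [pow_succ' mB, mul_assoc]
      apply Ideal.mul_mono_right
      calc mB ^ (i : ℕ) * M ^ (n - ((i : ℕ) + 1))
          ≤ M ^ (i : ℕ) * M ^ (n - ((i : ℕ) + 1)) :=
            Ideal.mul_mono_left (Ideal.pow_right_mono hmBM _)
      _ = M ^ ((i : ℕ) + (n - ((i : ℕ) + 1))) := by rw [Ideal.IsTwoSided.pow_add]
      _ = M ^ k := by congr 1; omega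
    exact hle (Ideal.mul_mem_mul hca hzp)
  have main : M ^ n = mB * M ^ (n - 1) := by
    rw [hk1]
    apply le_antisymm
    · calc M ^ n = (mB ⊔ J) ^ (k + 1) := by rw [hM, hk]
      _ ≤ mB * (mB ⊔ J) ^ k ⊔ J ^ (k + 1) := sup_pow_le_aux _ _ _
      _ = mB * M ^ k ⊔ J ^ n := by rw [← hM, hk]
      _ ≤ mB * M ^ k := by
          apply sup_le le_rfl
          rw [hJ, Ideal.span_singleton_pow, Ideal.span_le, Set.singleton_subset_iff]
          exact hzn
    · calc mB * M ^ k ≤ M * M ^ k := Ideal.mul_mono_left hmBM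
      _ = M ^ n := by rw [hk, Ideal.IsTwoSided.pow_succ]
  exact ⟨main, k, by rw [← hk, main, hk1]⟩
end
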